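/- Let G be a k×n matrix over a finite field F_q of rank k with property A_t in which the reconstruction sets have size at most r (so for every i ∈ {1,…,k} there exist t pairwise disjoint sets of column indices, each of size at most r, each admitting a linear combination of the corresponding columns of G equal to e_i), and let d be the minimum Hamming distance of the code {x·G : x ∈ F_q^k}. Then n ≥ k + d + (t−1)·(⌈ k/(r·t − t + 1) ⌉ − 1) − 1. -/

import Mathlib

/-- Some `F`-linear combination of the columns of `G` indexed by `T` equals the vector `v`. -/
def ColLinComb {F : Type*} [Field F] {k n : ℕ} (G : Matrix (Fin k) (Fin n) F)
    (T : Finset (Fin n)) (v : Fin k → F) : Prop :=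
  ∃ c : Fin n → F, ∑ j ∈ T, c j • G.transpose j = v

/-- `G` has property `A_t` with reconstruction sets of size at most `r`. -/
def PropertyAWith {F : Type*} [Field F] {k n : ℕ} (G : Matrix (Fin k) (Fin n) F)
    (t r : ℕ) : Prop :=
  ∀ i : Fin k, ∃ T : Fin t → Finset (Fin n),
    (∀ j₁ j₂ : Fin t, j₁ ≠ j₂ → Disjoint (T j₁) (T j₂)) ∧
    ∀ j : Fin t, (T j).card ≤ r ∧ ColLinComb G (T j) (Pi.single i 1)

open Module Submodule Finset

set_option linter.unusedSectionVars false

section Aux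

variable {F : Type*} [Field F] [DecidableEq F] {k n : ℕ} (G : Matrix (Fin k) (Fin n) F)

/-- Span of the columns of `G` indexed by `S`. -/
def Vspan (S : Finset (Fin n)) : Submodule F (Fin k → F) :=
  Submodule.span F ↑(S.image G.transpose)

lemma Vspan_mono {A B : Finset (Fin n)} (h : A ⊆ B) : Vspan G A ≤ Vspan G B :=
  span_mono (Finset.coe_subset.2 (Finset.image_subset_image h))

lemma col_mem_Vspan {S : Finset (Fin n)} {l : Fin n} (hl : l ∈ S) :
    G.transpose l ∈ Vspan G S :=
  subset_span (Finset.mem_coe.2 (Finset.mem_image_of_mem _ hl))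

lemma finrank_Vspan_le (S : Finset (Fin n)) : finrank F (Vspan G S) ≤ S.card :=
  le_trans (finrank_span_finset_le_card _) Finset.card_image_le

lemma finrank_Vspan_union_le (A B : Finset (Fin n)) :
    finrank F (Vspan G (A ∪ B)) ≤ finrank F (Vspan G A) + B.card := by
  have h1 : Vspan G (A ∪ B) = Vspan G A ⊔ Vspan G B := by
    rw [Vspan, show (A ∪ B).image G.transpose = A.image G.transpose ∪ B.image G.transpose from
      Finset.image_union _ _, Finset.coe_union, Submodule.span_union]; rfl
  rw [h1]
  calc finrank F ↥(Vspan G A ⊔ Vspan G B)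
      ≤ finrank F (Vspan G A) + finrank F (Vspan G B) := by
        have := finrank_sup_add_finrank_inf_eq (Vspan G A) (Vspan G B)
        omega
    _ ≤ finrank F (Vspan G A) + B.card := by
        have := finrank_Vspan_le G B; omega

lemma exists_single_not_mem {S : Finset (Fin n)} (h : finrank F (Vspan G S) < k) :
    ∃ i : Fin k, Pi.single i 1 ∉ Vspan G S := by
  by_contra hc
  push_neg at hc
  have htop : Vspan G S = ⊤ := by
    rw [eq_top_iff]
    intro x _
    rw [pi_eq_sum_univ x]
    refine Submodule.sum_mem _ fun i _ => Submodule.smul_mem _ _ ?_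
    have : (fun j => if i = j then (1:F) else 0) = Pi.single i 1 := by
      funext j; simp [Pi.single_apply, eq_comm]
    rw [this]; exact hc i
  rw [htop, finrank_top] at h
  simp [Module.finrank_pi] at h

lemma exists_col_not_mem (hrank : G.rank = k) {S : Finset (Fin n)}
    (h : finrank F (Vspan G S) < k) :
    ∃ j : Fin n, G.transpose j ∉ Vspan G S := by
  by_contra hc
  push_neg at hc
  have hle : Submodule.span F (Set.range G.transpose) ≤ Vspan G S :=
    span_le.2 (by rintro v ⟨j, rfl⟩; exact hc j)
  have h2 : G.rank = finrank F (Submodule.span F (Set.range G.transpose)) := by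
    rw [Matrix.rank, Matrix.range_mulVecLin]; rfl
  have h3 : finrank F (Submodule.span F (Set.range G.transpose)) ≤ finrank F (Vspan G S) :=
    Submodule.finrank_mono hle
  omega

lemma round_lemma {t r : ℕ} (ht : 0 < t) (hA : PropertyAWith G t r)
    {S : Finset (Fin n)} {i : Fin k} (hi : Pi.single i 1 ∉ Vspan G S) :
    ∃ S' : Finset (Fin n), S ⊆ S' ∧ S'.card ≤ S.card + r * t ∧
      finrank F (Vspan G S') + (t - 1) + S.card ≤ finrank F (Vspan G S) + S'.card := by
  obtain ⟨T, hdisj, hT⟩ := hA i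
  choose c hc using fun j => (hT j).2
  have hx : ∀ j : Fin t, ∃ l, l ∈ T j ∧ c j l ≠ 0 ∧ l ∉ S := by
    intro j
    by_contra hcon
    push_neg at hcon
    apply hi
    rw [← hc j]
    refine Submodule.sum_mem _ fun l hl => ?_
    by_cases h0 : c j l = 0
    · simp [h0]
    · exact Submodule.smul_mem _ _ (col_mem_Vspan G (hcon l hl h0))
  choose x hxT hxc hxS using hx
  have hxinj : Function.Injective x := by
    intro j j' h
    by_contra hne
    exact (Finset.disjoint_left.1 (hdisj j j' hne)) (hxT j) (h ▸ hxT j')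
  set j₀ : Fin t := ⟨0, ht⟩ with hj₀
  set U : Finset (Fin n) := Finset.univ.biUnion T with hUdef
  set X : Finset (Fin n) := (Finset.univ.erase j₀).image x with hXdef
  set S' := S ∪ U with hS'def
  have hTU : ∀ j, T j ⊆ U := fun j => Finset.subset_biUnion_of_mem T (mem_univ j)
  have hTX : ∀ j l, l ∈ T j → l ∈ X → l = x j := by
    intro j l hl hlX
    obtain ⟨j', hj', rfl⟩ := Finset.mem_image.1 hlX
    by_cases hjj : j' = j
    · rw [hjj]
    · exact absurd hl (Finset.disjoint_left.1 (hdisj j' j hjj) (hxT j'))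
  have hj0X : ∀ l ∈ T j₀, l ∉ X := by
    intro l hl hlX
    obtain ⟨j', hj', hj'l⟩ := Finset.mem_image.1 hlX
    have : l = x j₀ := hTX j₀ l hl hlX
    exact (Finset.ne_of_mem_erase hj') (hxinj (hj'l.trans this))
  have he : Pi.single i 1 ∈ Vspan G (S' \ X) := by
    rw [← hc j₀]
    refine Submodule.sum_mem _ fun l hl => Submodule.smul_mem _ _ (col_mem_Vspan G ?_)
    exact Finset.mem_sdiff.2 ⟨Finset.mem_union_right _ (hTU j₀ hl), hj0X l hl⟩
  have hXcol : ∀ j, j ≠ j₀ → G.transpose (x j) ∈ Vspan G (S' \ X) := by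
    intro j hj
    have hsplit := hc j
    rw [← Finset.add_sum_erase _ _ (hxT j)] at hsplit
    have hrest : ∑ l ∈ (T j).erase (x j), c j l • G.transpose l ∈ Vspan G (S' \ X) := by
      refine Submodule.sum_mem _ fun l hl => Submodule.smul_mem _ _ (col_mem_Vspan G ?_)
      have hlT := Finset.mem_of_mem_erase hl
      refine Finset.mem_sdiff.2 ⟨Finset.mem_union_right _ (hTU j hlT), fun hlX =>
        (Finset.ne_of_mem_erase hl) (hTX j l hlT hlX)⟩
    have hsm : c j (x j) • G.transpose (x j) ∈ Vspan G (S' \ X) := by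
      have heq : c j (x j) • G.transpose (x j)
          = Pi.single i 1 - ∑ l ∈ (T j).erase (x j), c j l • G.transpose l := by
        rw [← hsplit]; abel
      rw [heq]
      exact Submodule.sub_mem _ he hrest
    have := Submodule.smul_mem _ (c j (x j))⁻¹ hsm
    rwa [inv_smul_smul₀ (hxc j)] at this
  have hkey : Vspan G S' = Vspan G (S' \ X) := by
    refine le_antisymm ?_ (Vspan_mono G Finset.sdiff_subset)
    rw [Vspan, show ((S'.image G.transpose : Finset (Fin k → F)) : Set (Fin k → F)) =
      G.transpose '' ↑S' from Finset.coe_image, Submodule.span_le]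
    rintro v ⟨l, hl, rfl⟩
    by_cases hlX : l ∈ X
    · obtain ⟨j', hj', rfl⟩ := Finset.mem_image.1 hlX
      exact hXcol j' (Finset.ne_of_mem_erase hj')
    · exact col_mem_Vspan G (Finset.mem_sdiff.2 ⟨hl, hlX⟩)
  have hXUS : X ⊆ U \ S := by
    intro l hlX
    obtain ⟨j', _, rfl⟩ := Finset.mem_image.1 hlX
    exact Finset.mem_sdiff.2 ⟨hTU j' (hxT j'), hxS j'⟩
  have hXcard : X.card = t - 1 := by
    rw [hXdef, Finset.card_image_of_injective _ hxinj,
      Finset.card_erase_of_mem (Finset.mem_univ _), Finset.card_univ, Fintype.card_fin]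
  have hW : S' \ X = S ∪ ((U \ S) \ X) := by
    ext l
    simp only [Finset.mem_sdiff, Finset.mem_union, hS'def]
    have hls : l ∈ S → l ∉ X := fun hS hX => (Finset.mem_sdiff.1 (hXUS hX)).2 hS
    tauto
  have h1 : finrank F (Vspan G S') ≤ finrank F (Vspan G S) + ((U \ S) \ X).card := by
    rw [hkey, hW]
    exact finrank_Vspan_union_le G _ _
  have hWcard : ((U \ S) \ X).card = (U \ S).card - (t - 1) := by
    rw [Finset.card_sdiff_of_subset hXUS, hXcard]
  have htX : t - 1 ≤ (U \ S).card := hXcard ▸ Finset.card_le_card hXUS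
  have hS'card : S'.card = S.card + (U \ S).card := by
    rw [hS'def, ← Finset.union_sdiff_self_eq_union,
      Finset.card_union_of_disjoint Finset.disjoint_sdiff]
  have hUS : (U \ S).card ≤ r * t := by
    calc (U \ S).card ≤ U.card := Finset.card_le_card Finset.sdiff_subset
      _ ≤ ∑ j, (T j).card := Finset.card_biUnion_le
      _ ≤ ∑ _j : Fin t, r := Finset.sum_le_sum fun j _ => (hT j).1
      _ = r * t := by
          rw [Finset.sum_const, Finset.card_univ, Fintype.card_fin, smul_eq_mul, mul_comm]
  exact ⟨S', Finset.subset_union_left, by omega, by omega⟩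

lemma rounds_lemma {t r : ℕ} (ht : 0 < t) (hA : PropertyAWith G t r) :
    ∀ m : ℕ, m * (r * t - (t - 1)) < k →
      ∃ S : Finset (Fin n), finrank F (Vspan G S) ≤ m * (r * t - (t - 1)) ∧
        finrank F (Vspan G S) + m * (t - 1) ≤ S.card := by
  intro m
  induction m with
  | zero =>
    intro _
    refine ⟨∅, ?_, ?_⟩ <;> simpa using finrank_Vspan_le G (∅ : Finset (Fin n))
  | succ m ih =>
    intro hm
    have hmle : m * (r * t - (t - 1)) ≤ (m + 1) * (r * t - (t - 1)) :=
      Nat.mul_le_mul_right _ (Nat.le_succ m)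
    obtain ⟨S, hS1, hS2⟩ := ih (lt_of_le_of_lt hmle hm)
    have hlt : finrank F (Vspan G S) < k := lt_of_le_of_lt (hS1.trans hmle) hm
    obtain ⟨i, hi⟩ := exists_single_not_mem G hlt
    obtain ⟨S', hsub, hcard, hfr⟩ := round_lemma G ht hA hi
    refine ⟨S', ?_, ?_⟩
    · have e1 : (m + 1) * (r * t - (t - 1)) = m * (r * t - (t - 1)) + (r * t - (t - 1)) := by
        ring
      omega
    · have e2 : (m + 1) * (t - 1) = m * (t - 1) + (t - 1) := by ring
      omega

lemma pad_lemma (hrank : G.rank = k) :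
    ∀ (p : ℕ) (S : Finset (Fin n)), finrank F (Vspan G S) + p < k →
      ∃ S', S ⊆ S' ∧ S'.card = S.card + p ∧
        finrank F (Vspan G S') = finrank F (Vspan G S) + p := by
  intro p
  induction p with
  | zero => intro S _; exact ⟨S, Finset.Subset.refl S, by omega, by omega⟩
  | succ p ih =>
    intro S hp
    have hlt : finrank F (Vspan G S) < k := by omega
    obtain ⟨j, hj⟩ := exists_col_not_mem G hrank hlt
    have hjS : j ∉ S := fun hjS => hj (col_mem_Vspan G hjS)
    have hins : insert j S = S ∪ {j} := by
      ext l; simp [or_comm]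
    have hle : finrank F (Vspan G (insert j S)) ≤ finrank F (Vspan G S) + 1 := by
      rw [hins]
      simpa using finrank_Vspan_union_le G S {j}
    have hlt2 : finrank F (Vspan G S) < finrank F (Vspan G (insert j S)) := by
      refine Submodule.finrank_lt_finrank_of_lt (lt_of_le_of_ne
        (Vspan_mono G (Finset.subset_insert j S)) fun heq => hj ?_)
      rw [heq]
      exact col_mem_Vspan G (Finset.mem_insert_self j S)
    have heq1 : finrank F (Vspan G (insert j S)) = finrank F (Vspan G S) + 1 := by omega
    have hp2 : finrank F (Vspan G (insert j S)) + p < k := by omega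
    obtain ⟨S', hsub, hcard, hfr⟩ := ih (insert j S) hp2
    refine ⟨S', (Finset.subset_insert j S).trans hsub, ?_, ?_⟩
    · rw [hcard, Finset.card_insert_of_notMem hjS]; omega
    · omega

lemma exists_codeword (S : Finset (Fin n)) (hne : Vspan G S ≠ ⊤) :
    ∃ y : Fin k → F, y ≠ 0 ∧ ∀ l ∈ S, Matrix.vecMul y G l = 0 := by
  set V := Vspan G S with hV
  obtain ⟨w, hw⟩ : ∃ w, w ∉ V := by
    by_contra hcon; push_neg at hcon; exact hne (eq_top_iff.2 fun v _ => hcon v)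
  have hw0 : V.mkQ w ≠ 0 := by
    simpa [Submodule.mkQ_apply, Submodule.Quotient.mk_eq_zero] using hw
  have : ¬ ∀ φ : Module.Dual F (_ ⧸ V), φ (V.mkQ w) = 0 := by
    rw [Module.forall_dual_apply_eq_zero_iff]; exact hw0
  push_neg at this
  obtain ⟨ψ, hψ⟩ := this
  set φ : (Fin k → F) →ₗ[F] F := ψ.comp V.mkQ with hφdef
  have hφV : ∀ v ∈ V, φ v = 0 := by
    intro v hv
    have : V.mkQ v = 0 := by
      simpa [Submodule.mkQ_apply, Submodule.Quotient.mk_eq_zero] using hv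
    simp [hφdef, this]
  set y : Fin k → F := fun i => φ (Pi.single i 1) with hydef
  have hφsum : ∀ v : Fin k → F, φ v = ∑ i, v i * y i := by
    intro v
    conv_lhs => rw [pi_eq_sum_univ v]
    rw [map_sum]
    refine Finset.sum_congr rfl fun i _ => ?_
    rw [map_smul, smul_eq_mul, hydef]
    congr 2
    funext j; simp [Pi.single_apply, eq_comm]
  refine ⟨y, ?_, ?_⟩
  · intro hy0
    apply hψ
    have : φ w = 0 := by rw [hφsum w, hy0]; simp
    simpa [hφdef] using this
  · intro l hl
    have h0 : φ (G.transpose l) = 0 := hφV _ (col_mem_Vspan G hl)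
    rw [hφsum] at h0
    rw [Matrix.vecMul, ← h0]
    refine Finset.sum_congr rfl fun i _ => ?_
    simp [Matrix.transpose_apply, mul_comm, dotProduct]

end Aux

/-- **Singleton-type bound for PIR/batch codes with restricted reconstruction sets
(Zhang–Skachek).**  If `G` has rank `k`, property `A_t` with reconstruction sets of size at
most `r`, and the code `{x·G}` has minimum distance `d`, then
`n ≥ k + d + (t−1)·(⌈k/(r·t−t+1)⌉ − 1) − 1`. -/
theorem bound_PIR_restricted {F : Type*} [Field F] [Fintype F] [DecidableEq F]
    {k n t r d : ℕ} (G : Matrix (Fin k) (Fin n) F)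
    (hrank : G.rank = k)
    (hA : PropertyAWith G t r)
    (hd : IsLeast {w : ℕ | ∃ x : Fin k → F, x ≠ 0 ∧ hammingNorm (Matrix.vecMul x G) = w} d) :
    (k : ℤ) + d + ((t : ℤ) - 1) *
        (⌈(k : ℚ) / ((r : ℚ) * t - t + 1)⌉ - 1) - 1 ≤ (n : ℤ) := by
  classical
  -- k is positive, since otherwise there is no nonzero message
  have hk : 0 < k := by
    rcases Nat.eq_zero_or_pos k with hk0 | hk
    · obtain ⟨⟨x, hx, _⟩, _⟩ := hd
      subst hk0
      exact absurd (funext fun i => i.elim0) hx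
    · exact hk
  -- d ≤ n always
  have hdn : d ≤ n := by
    obtain ⟨⟨x0, hx0, hxd⟩, _⟩ := hd
    have : hammingNorm (Matrix.vecMul x0 G) ≤ n := by
      have := Finset.card_filter_le (Finset.univ : Finset (Fin n))
        (fun i => Matrix.vecMul x0 G i ≠ 0)
      simpa [hammingNorm] using this
    omega
  rcases Nat.eq_zero_or_pos t with rfl | ht
  · -- t = 0 : the bound reduces to d ≤ n
    have h1 : ((r : ℚ) * (0:ℕ) - (0:ℕ) + 1) = 1 := by push_cast; ring
    rw [h1]
    rw [div_one, Int.ceil_natCast]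
    push_cast
    have : (d : ℤ) ≤ n := by exact_mod_cast hdn
    linarith
  rcases Nat.eq_zero_or_pos r with rfl | hr
  · -- r = 0 : contradiction with property A_t
    exfalso
    obtain ⟨T, _, hT⟩ := hA ⟨0, hk⟩
    obtain ⟨c, hc⟩ := (hT ⟨0, ht⟩).2
    have hTe : T ⟨0, ht⟩ = ∅ := Finset.card_eq_zero.1 (Nat.le_zero.1 (hT ⟨0, ht⟩).1)
    rw [hTe, Finset.sum_empty] at hc
    have := congrFun hc ⟨0, hk⟩
    simp [Pi.single_eq_same] at this
  -- main case : k, t, r ≥ 1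
  set s : ℕ := r * t - (t - 1) with hs
  have hrt : t ≤ r * t := Nat.le_mul_of_pos_left t hr
  have hs1 : 1 ≤ s := by omega
  have hsQ : ((r : ℚ) * t - t + 1) = (s : ℚ) := by
    have h2 : s = r * t - t + 1 := by omega
    rw [h2]
    push_cast [Nat.cast_sub hrt]
    ring
  rw [hsQ]
  set cI : ℤ := ⌈(k : ℚ) / (s : ℚ)⌉ with hcI
  have hsQ0 : (0 : ℚ) < (s : ℚ) := by exact_mod_cast hs1
  have hc1 : 1 ≤ cI := Int.ceil_pos.2 (div_pos (by exact_mod_cast hk) hsQ0)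
  set m : ℕ := (cI - 1).toNat with hm
  have hmI : (m : ℤ) = cI - 1 := Int.toNat_of_nonneg (by omega)
  have hms : m * s < k := by
    have h3 : ((cI : ℚ)) < (k : ℚ) / (s : ℚ) + 1 := Int.ceil_lt_add_one _
    have h4 : ((m : ℚ)) < (k : ℚ) / (s : ℚ) := by
      have : ((m : ℚ)) = (cI : ℚ) - 1 := by exact_mod_cast hmI
      linarith
    have h5 : ((m : ℚ)) * (s : ℚ) < (k : ℚ) := (lt_div_iff₀ hsQ0).1 h4
    exact_mod_cast h5
  obtain ⟨S, hS1, hS2⟩ := rounds_lemma G ht hA m hms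
  have hfrk : finrank F (Vspan G S) < k := lt_of_le_of_lt hS1 hms
  have hp : finrank F (Vspan G S) + (k - 1 - finrank F (Vspan G S)) < k := by omega
  obtain ⟨S', hsub, hcard, hfr'⟩ :=
    pad_lemma G hrank (k - 1 - finrank F (Vspan G S)) S hp
  have hfrS' : finrank F (Vspan G S') = k - 1 := by omega
  have hne : Vspan G S' ≠ ⊤ := by
    intro htop
    rw [htop, finrank_top] at hfrS'
    simp [Module.finrank_pi] at hfrS'
    omega
  obtain ⟨y, hy0, hyS⟩ := exists_codeword G S' hne
  have hdle : d ≤ hammingNorm (Matrix.vecMul y G) := hd.2 ⟨y, hy0, rfl⟩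
  have hsupp : hammingNorm (Matrix.vecMul y G) + S'.card ≤ n := by
    have hdisj : Disjoint ((Finset.univ : Finset (Fin n)).filter
        fun l => Matrix.vecMul y G l ≠ 0) S' :=
      Finset.disjoint_left.2 fun l hl hlS => (Finset.mem_filter.1 hl).2 (hyS l hlS)
    calc hammingNorm (Matrix.vecMul y G) + S'.card
        = (((Finset.univ : Finset (Fin n)).filter
            fun l => Matrix.vecMul y G l ≠ 0) ∪ S').card := by
          rw [Finset.card_union_of_disjoint hdisj]; rfl
      _ ≤ (Finset.univ : Finset (Fin n)).card := Finset.card_le_card (Finset.subset_univ _)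
      _ = n := by simp
  have hN : d + (k - 1) + m * (t - 1) ≤ n := by omega
  have hZ : (d : ℤ) + ((k : ℤ) - 1) + (m : ℤ) * ((t : ℤ) - 1) ≤ (n : ℤ) := by
    have := hN
    zify [Nat.one_le_iff_ne_zero.1 hk, ht, hk] at this
    push_cast [Nat.cast_sub hk, Nat.cast_sub ht] at this ⊢
    convert this using 2 <;> push_cast <;> ring
  rw [← hmI]
  nlinarith [hZ]
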